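/- Let g(ε) = Y^I + εK(K/Y^I)^{1/ε} for ε > 0 with 0 < K < Y^I. Then g is strictly increasing and strictly convex on (0,∞), with derivative g'(ε) = K(K/Y^I)^{1/ε}·(1 − (1/ε)·ln(K/Y^I)), second derivative g''(ε) = K(K/Y^I)^{1/ε}·(1/ε³)·(ln(K/Y^I))² > 0, and lim_{ε→∞} g'(ε) = K. -/

import Mathlib

/-- The function `g(ε) = Y + εK(K/Y)^{1/ε}` with `0 < K < Y` is
strictly increasing and strictly convex on `(0,∞)`, has the stated first and
second derivatives, the second derivative is positive, and the first derivative
tends to `K` as `ε → ∞`. -/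
theorem notch_lhs_properties
    (K Y : ℝ) (hK : 0 < K) (hKY : K < Y) :
    let g : ℝ → ℝ := fun ε => Y + ε * K * (K / Y) ^ (1 / ε)
    let g' : ℝ → ℝ := fun ε => K * (K / Y) ^ (1 / ε) * (1 - (1 / ε) * Real.log (K / Y))
    let g'' : ℝ → ℝ := fun ε => K * (K / Y) ^ (1 / ε) * (1 / ε ^ 3) * (Real.log (K / Y)) ^ 2
    StrictMonoOn g (Set.Ioi 0) ∧
    StrictConvexOn ℝ (Set.Ioi 0) g ∧
    (∀ ε : ℝ, 0 < ε → HasDerivAt g (g' ε) ε) ∧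
    (∀ ε : ℝ, 0 < ε → HasDerivAt g' (g'' ε) ε ∧ 0 < g'' ε) ∧
    Filter.Tendsto g' Filter.atTop (nhds K) := by
  intro g g' g''
  have hY : 0 < Y := hK.trans hKY
  have hq : 0 < K / Y := div_pos hK hY
  set L := Real.log (K / Y) with hLdef
  have hLneg : L < 0 := Real.log_neg hq ((div_lt_one hY).2 hKY)
  have hrp : ∀ x : ℝ, (K / Y) ^ x = Real.exp (L * x) := fun x =>
    Real.rpow_def_of_pos hq x
  -- explicit exp forms
  have hgG : g = fun ε : ℝ => Y + ε * K * Real.exp (L * ε⁻¹) := by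
    funext ε; simp [g, hrp, one_div]
  have hg'G : g' = fun ε : ℝ => K * Real.exp (L * ε⁻¹) * (1 - ε⁻¹ * L) := by
    funext ε; simp [g', hrp, one_div]
    exact Or.inl (Or.inl hLdef.symm)
  -- first derivative
  have hd1 : ∀ ε : ℝ, 0 < ε → HasDerivAt g (g' ε) ε := by
    intro ε hε
    have hne : ε ≠ 0 := hε.ne'
    have A : HasDerivAt (fun x : ℝ => x⁻¹) (-(ε ^ 2)⁻¹) ε := hasDerivAt_inv hne
    have B : HasDerivAt (fun x : ℝ => L * x⁻¹) (L * -(ε ^ 2)⁻¹) ε := A.const_mul L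
    have C : HasDerivAt (fun x : ℝ => Real.exp (L * x⁻¹))
        (Real.exp (L * ε⁻¹) * (L * -(ε ^ 2)⁻¹)) ε := by
      simpa [mul_comm] using B.exp
    have D : HasDerivAt (fun x : ℝ => x * K) K ε := by
      simpa using (hasDerivAt_id ε).mul_const K
    have E := (D.mul C).const_add Y
    rw [hgG, hg'G]
    refine E.congr_deriv ?_
    field_simp
    ring
  have hd2 : ∀ ε : ℝ, 0 < ε → HasDerivAt g' (g'' ε) ε := by
    intro ε hε
    have hne : ε ≠ 0 := hε.ne'
    have A : HasDerivAt (fun x : ℝ => x⁻¹) (-(ε ^ 2)⁻¹) ε := hasDerivAt_inv hne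
    have B : HasDerivAt (fun x : ℝ => L * x⁻¹) (L * -(ε ^ 2)⁻¹) ε := A.const_mul L
    have C : HasDerivAt (fun x : ℝ => Real.exp (L * x⁻¹))
        (Real.exp (L * ε⁻¹) * (L * -(ε ^ 2)⁻¹)) ε := by
      simpa [mul_comm] using B.exp
    have H : HasDerivAt (fun x : ℝ => 1 - x⁻¹ * L) (-(-(ε ^ 2)⁻¹ * L)) ε :=
      (A.mul_const L).const_sub 1
    have E := (C.const_mul K).mul H
    rw [hg'G]
    show HasDerivAt _ (K * (K / Y) ^ (1 / ε) * (1 / ε ^ 3) * L ^ 2) ε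
    rw [hrp, one_div]
    refine E.congr_deriv ?_
    field_simp
    ring
  have hpos'' : ∀ ε : ℝ, 0 < ε → 0 < g'' ε := by
    intro ε hε
    show 0 < K * (K / Y) ^ (1 / ε) * (1 / ε ^ 3) * L ^ 2
    have h1 : (0:ℝ) < (K / Y) ^ (1 / ε) := Real.rpow_pos_of_pos hq _
    have h2 : (0:ℝ) < 1 / ε ^ 3 := by positivity
    have h3 : (0:ℝ) < L ^ 2 := by nlinarith
    exact mul_pos (mul_pos (mul_pos hK h1) h2) h3
  have hpos' : ∀ ε : ℝ, 0 < ε → 0 < g' ε := by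
    intro ε hε
    show 0 < K * (K / Y) ^ (1 / ε) * (1 - 1 / ε * L)
    have h1 : (0:ℝ) < (K / Y) ^ (1 / ε) := Real.rpow_pos_of_pos hq _
    have h2 : 1 / ε * L < 0 := mul_neg_of_pos_of_neg (by positivity) hLneg
    have h3 : (0:ℝ) < 1 - 1 / ε * L := by linarith
    exact mul_pos (mul_pos hK h1) h3
  -- deriv identities on Ioi 0
  have hderiv_eq : ∀ ε ∈ interior (Set.Ioi (0:ℝ)), deriv g ε = g' ε := by
    intro ε hε
    rw [interior_Ioi] at hε
    exact (hd1 ε hε).deriv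
  have hcont : ContinuousOn g (Set.Ioi 0) := fun x hx =>
    ((hd1 x hx).differentiableAt.continuousAt).continuousWithinAt
  have hmono : StrictMonoOn g (Set.Ioi 0) := by
    apply strictMonoOn_of_deriv_pos (convex_Ioi 0) hcont
    intro x hx
    rw [interior_Ioi] at hx
    rw [(hd1 x hx).deriv]
    exact hpos' x hx
  have hconv : StrictConvexOn ℝ (Set.Ioi 0) g := by
    apply strictConvexOn_of_deriv2_pos (convex_Ioi 0) hcont
    intro x hx
    rw [interior_Ioi] at hx
    have heq : deriv g =ᶠ[nhds x] g' := by
      filter_upwards [IsOpen.mem_nhds isOpen_Ioi hx] with y hy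
      exact (hd1 y hy).deriv
    have : deriv^[2] g x = deriv (deriv g) x := by simp [Function.iterate_succ]
    rw [this, Filter.EventuallyEq.deriv_eq heq, (hd2 x hx).deriv]
    exact hpos'' x hx
  have htend : Filter.Tendsto g' Filter.atTop (nhds K) := by
    rw [hg'G]
    have t0 : Filter.Tendsto (fun ε : ℝ => ε⁻¹) Filter.atTop (nhds 0) :=
      tendsto_inv_atTop_zero
    have t1 : Filter.Tendsto (fun ε : ℝ => Real.exp (L * ε⁻¹)) Filter.atTop (nhds 1) := by
      have t0' : Filter.Tendsto (fun ε : ℝ => L * ε⁻¹) Filter.atTop (nhds 0) := by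
        simpa using t0.const_mul L
      have := (Real.continuous_exp.tendsto 0).comp t0'
      simpa [Function.comp_def] using this
    have t2 : Filter.Tendsto (fun ε : ℝ => 1 - ε⁻¹ * L) Filter.atTop (nhds 1) := by
      have := (t0.mul_const L).const_sub 1
      simpa using this
    have := ((t1.const_mul K).mul t2)
    simpa using this
  exact ⟨hmono, hconv, hd1, fun ε hε => ⟨hd2 ε hε, hpos'' ε hε⟩, htend⟩
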